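/- Under the single functional dependency setting (cliques partitioned into clusters, conflicts exactly between distinct clusters of the same clique), the disjunctive database D consisting of all disjunctions {t_1, ..., t_k} obtained by picking one fact from each cluster of some clique (one such disjunction for every clique and every choice of representatives) has as its minimal models exactly the repairs, i.e., exactly the unions of one cluster per clique. -/
import Mathlib


variable {F : Type*} [DecidableEq F]

/-- M is a model of the disjunctive database D: it meets every disjunction. -/
def IsModel (D : Finset (Finset F)) (M : Finset F) : Prop :=
  ∀ d ∈ D, ∃ t ∈ d, t ∈ M

/-- M is a minimal model of D. -/
def IsMinModel (D : Finset (Finset F)) (M : Finset F) : Prop :=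
  IsModel D M ∧ ∀ M' ⊂ M, ¬ IsModel D M'

/-- reduction removes every disjunction properly containing another disjunction of D. -/
def reduction (D : Finset (Finset F)) : Finset (Finset F) :=
  D.filter (fun d => ∀ d' ∈ D, ¬ d' ⊂ d)

theorem stmt9 (n : ℕ) (m : Fin n → ℕ) (hm : ∀ i, 0 < m i)
    (G : (i : Fin n) → Fin (m i) → Finset F)
    (hne : ∀ i j, (G i j).Nonempty)
    (hdisj : ∀ p q : Σ i : Fin n, Fin (m i), p ≠ q → Disjoint (G p.1 p.2) (G q.1 q.2))
    (D : Finset (Finset F))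
    (hD : ∀ d : Finset F, d ∈ D ↔
      ∃ (i : Fin n) (g : Fin (m i) → F), (∀ j, g j ∈ G i j) ∧ d = Finset.univ.image g) :
    ∀ M : Finset F,
      IsMinModel D M
      ↔ ∃ j : (i : Fin n) → Fin (m i), M = Finset.univ.biUnion (fun i => G i (j i)) := by
  classical
  -- Characterization of models: M is a model iff it contains a full cluster per clique.
  have hmodel : ∀ M : Finset F, IsModel D M ↔ ∀ i, ∃ j, G i j ⊆ M := by
    intro M
    constructor
    · intro hM i
      by_contra h
      push_neg at h
      have hg : ∀ j : Fin (m i), ∃ x, x ∈ G i j ∧ x ∉ M := by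
        intro j
        obtain ⟨x, hx, hxM⟩ := Finset.not_subset.mp (h j)
        exact ⟨x, hx, hxM⟩
      choose g hg1 hg2 using hg
      have hd : Finset.univ.image g ∈ D := (hD _).mpr ⟨i, g, hg1, rfl⟩
      obtain ⟨t, ht, htM⟩ := hM _ hd
      obtain ⟨j, _, rfl⟩ := Finset.mem_image.mp ht
      exact hg2 j htM
    · intro h d hd
      obtain ⟨i, g, hg, rfl⟩ := (hD d).mp hd
      obtain ⟨j, hj⟩ := h i
      exact ⟨g j, Finset.mem_image_of_mem g (Finset.mem_univ j), hj (hg j)⟩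
  -- If a cluster is contained in a repair, it is one of the chosen clusters.
  have hsub : ∀ (j : (i : Fin n) → Fin (m i)) (i : Fin n) (j' : Fin (m i)),
      G i j' ⊆ Finset.univ.biUnion (fun k => G k (j k)) → j' = j i := by
    intro j i j' hss
    obtain ⟨y, hy⟩ := hne i j'
    obtain ⟨k, _, hyk⟩ := Finset.mem_biUnion.mp (hss hy)
    have heq : (⟨i, j'⟩ : Σ i : Fin n, Fin (m i)) = ⟨k, j k⟩ := by
      by_contra hneq
      exact Finset.disjoint_left.mp (hdisj _ _ hneq) hy hyk
    obtain ⟨rfl, h2⟩ := Sigma.mk.inj_iff.mp heq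
    exact eq_of_heq h2
  intro M
  constructor
  · rintro ⟨hMmod, hMmin⟩
    obtain ⟨j, hj⟩ := Classical.axiomOfChoice ((hmodel M).mp hMmod)
    refine ⟨j, ?_⟩
    set M₀ := Finset.univ.biUnion (fun i => G i (j i)) with hM₀
    have hsubM : M₀ ⊆ M := Finset.biUnion_subset.mpr fun i _ => hj i
    have hM₀mod : IsModel D M₀ := (hmodel M₀).mpr fun i =>
      ⟨j i, Finset.subset_biUnion_of_mem (fun k => G k (j k)) (Finset.mem_univ i)⟩
    by_contra hneq
    exact hMmin M₀ (lt_of_le_of_ne hsubM fun h => hneq h.symm) hM₀mod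
  · rintro ⟨j, rfl⟩
    constructor
    · exact (hmodel _).mpr fun i =>
        ⟨j i, Finset.subset_biUnion_of_mem (fun k => G k (j k)) (Finset.mem_univ i)⟩
    · intro M' hM' hM'mod
      obtain ⟨x, hx, hxM'⟩ := Finset.exists_of_ssubset hM'
      obtain ⟨i, _, hxi⟩ := Finset.mem_biUnion.mp hx
      obtain ⟨j'', hj''⟩ := (hmodel M').mp hM'mod i
      have : j'' = j i := hsub j i j'' (hj''.trans hM'.subset)
      exact hxM' (hj'' (this ▸ hxi))
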